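/- Energy-identity for divergence-form convection on the whole domain with zero boundary trace data: if on each element T of a partition of Ω, (v₀, v_b) are given with v_b single-valued on interior edges and v_b = 0 on ∂Ω, then summing the weak-convection identity over elements gives Σ_T (∇_w^b v, v₀)_T = -(1/2) Σ_T (v₀, (∇·b) v₀)_T - (1/2) Σ_T ⟨(b·n)(v₀ - v_b), v₀ - v_b⟩_{∂T}, where all boundary terms involving v_b alone cancel across interior edges. -/

import Mathlib

/-- The divergence of a planar vector field. -/
noncomputable def div2 (F : ℝ × ℝ → ℝ × ℝ) (z : ℝ × ℝ) : ℝ :=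
  (fderiv ℝ F z (1, 0)).1 + (fderiv ℝ F z (0, 1)).2

open MeasureTheory intervalIntegral Set

lemma div2_cont {F : ℝ × ℝ → ℝ × ℝ} (hF : ContDiff ℝ 1 F) : Continuous (div2 F) := by
  have h : Continuous (fderiv ℝ F) := hF.continuous_fderiv one_ne_zero
  exact ((continuous_fst.comp (h.clm_apply continuous_const)).add
    (continuous_snd.comp (h.clm_apply continuous_const)))

lemma divthm {F : ℝ × ℝ → ℝ × ℝ} (hF : ContDiff ℝ 1 F) (a₁ b₁ a₂ b₂ : ℝ) :
    (∫ x in a₁..b₁, ∫ y in a₂..b₂, div2 F (x, y)) =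
      (∫ x in a₁..b₁, ((F (x, b₂)).2 - (F (x, a₂)).2))
        + (∫ y in a₂..b₂, ((F (b₁, y)).1 - (F (a₁, y)).1)) := by
  have hd : Differentiable ℝ F := hF.differentiable one_ne_zero
  have key := integral2_divergence_prod_of_hasFDerivAt_off_countable
    (fun z => (F z).1) (fun z => (F z).2)
    (fun z => (ContinuousLinearMap.fst ℝ ℝ ℝ).comp (fderiv ℝ F z))
    (fun z => (ContinuousLinearMap.snd ℝ ℝ ℝ).comp (fderiv ℝ F z))
    a₁ a₂ b₁ b₂ ∅ countable_empty
    ((continuous_fst.comp hF.continuous).continuousOn)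
    ((continuous_snd.comp hF.continuous).continuousOn)
    (fun z _ => ((ContinuousLinearMap.fst ℝ ℝ ℝ).hasFDerivAt.comp z (hd z).hasFDerivAt))
    (fun z _ => ((ContinuousLinearMap.snd ℝ ℝ ℝ).hasFDerivAt.comp z (hd z).hasFDerivAt))
    (((div2_cont hF).continuousOn).integrableOn_compact
      (isCompact_uIcc.prod isCompact_uIcc))
  simp only [ContinuousLinearMap.comp_apply, ContinuousLinearMap.coe_fst',
    ContinuousLinearMap.coe_snd'] at key
  have e1 : (∫ x in a₁..b₁, ((F (x, b₂)).2 - (F (x, a₂)).2))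
      = (∫ x in a₁..b₁, (F (x, b₂)).2) - ∫ x in a₁..b₁, (F (x, a₂)).2 := by
    apply intervalIntegral.integral_sub
    · exact (continuous_snd.comp (hF.continuous.comp (by fun_prop))).intervalIntegrable _ _
    · exact (continuous_snd.comp (hF.continuous.comp (by fun_prop))).intervalIntegrable _ _
  have e2 : (∫ y in a₂..b₂, ((F (b₁, y)).1 - (F (a₁, y)).1))
      = (∫ y in a₂..b₂, (F (b₁, y)).1) - ∫ y in a₂..b₂, (F (a₁, y)).1 := by
    apply intervalIntegral.integral_sub
    · exact (continuous_fst.comp (hF.continuous.comp (by fun_prop))).intervalIntegrable _ _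
    · exact (continuous_fst.comp (hF.continuous.comp (by fun_prop))).intervalIntegrable _ _
  rw [e1, e2, show (div2 F) = fun z => (fderiv ℝ F z (1,0)).1 + (fderiv ℝ F z (0,1)).2 from rfl]
  rw [key]; ring

lemma ptwise {bb : ℝ × ℝ → ℝ × ℝ} {f : ℝ × ℝ → ℝ} (hbb : ContDiff ℝ 1 bb)
    (hf : ContDiff ℝ 1 f) (z : ℝ × ℝ) :
    f z * div2 (fun w => f w • bb w) z
      = (1/2) * div2 (fun w => (f w * f w) • bb w) z
        + (1/2) * (f z * (div2 bb z * f z)) := by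
  have hdb : DifferentiableAt ℝ bb z := (hbb.differentiable one_ne_zero) z
  have hdf : DifferentiableAt ℝ f z := (hf.differentiable one_ne_zero) z
  unfold div2
  rw [fderiv_fun_smul hdf hdb, fderiv_fun_smul (hdf.fun_mul hdf) hdb, fderiv_fun_mul hdf hdf]
  simp only [ContinuousLinearMap.add_apply, ContinuousLinearMap.smul_apply,
    ContinuousLinearMap.smulRight_apply, Prod.fst_add, Prod.snd_add,
    Prod.smul_fst, Prod.smul_snd, smul_eq_mul]
  ring

lemma dbl {bb : ℝ × ℝ → ℝ × ℝ} {f : ℝ × ℝ → ℝ} (hbb : ContDiff ℝ 1 bb)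
    (hf : ContDiff ℝ 1 f) (a₁ b₁ a₂ b₂ : ℝ) :
    (∫ x in a₁..b₁, ∫ y in a₂..b₂, f (x, y) * div2 (fun z => f z • bb z) (x, y))
      = (1/2) * (∫ x in a₁..b₁, ∫ y in a₂..b₂, div2 (fun z => (f z * f z) • bb z) (x, y))
        + (1/2) * (∫ x in a₁..b₁, ∫ y in a₂..b₂, f (x, y) * (div2 bb (x, y) * f (x, y))) := by
  have hG : ContDiff ℝ 1 (fun z => (f z * f z) • bb z) := (hf.mul hf).smul hbb
  have cG : Continuous (div2 (fun z => (f z * f z) • bb z)) := div2_cont hG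
  have cB : Continuous (fun z : ℝ × ℝ => f z * (div2 bb z * f z)) :=
    hf.continuous.mul ((div2_cont hbb).mul hf.continuous)
  have hin : ∀ x : ℝ, (∫ y in a₂..b₂, f (x, y) * div2 (fun z => f z • bb z) (x, y))
      = (1/2) * (∫ y in a₂..b₂, div2 (fun z => (f z * f z) • bb z) (x, y))
        + (1/2) * (∫ y in a₂..b₂, f (x, y) * (div2 bb (x, y) * f (x, y))) := by
    intro x
    have h1 : IntervalIntegrable
        (fun y => (1/2) * div2 (fun z => (f z * f z) • bb z) (x, y)) volume a₂ b₂ :=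
      (continuous_const.mul (cG.comp (Continuous.prodMk_right x))).intervalIntegrable _ _
    have h2 : IntervalIntegrable
        (fun y => (1/2) * (f (x, y) * (div2 bb (x, y) * f (x, y)))) volume a₂ b₂ :=
      (continuous_const.mul (cB.comp (Continuous.prodMk_right x))).intervalIntegrable _ _
    rw [intervalIntegral.integral_congr (g := fun y =>
        (1/2) * div2 (fun z => (f z * f z) • bb z) (x, y)
          + (1/2) * (f (x, y) * (div2 bb (x, y) * f (x, y))))
        (fun y _ => ptwise hbb hf (x, y)),
      intervalIntegral.integral_add h1 h2,
      intervalIntegral.integral_const_mul, intervalIntegral.integral_const_mul]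
  have cA : Continuous (fun x : ℝ => ∫ y in a₂..b₂, div2 (fun z => (f z * f z) • bb z) (x, y)) :=
    intervalIntegral.continuous_parametric_intervalIntegral_of_continuous'
      (f := fun x y => div2 (fun z => (f z * f z) • bb z) (x, y)) (by fun_prop) _ _
  have cC : Continuous (fun x : ℝ => ∫ y in a₂..b₂, f (x, y) * (div2 bb (x, y) * f (x, y))) :=
    intervalIntegral.continuous_parametric_intervalIntegral_of_continuous'
      (f := fun x y => f (x, y) * (div2 bb (x, y) * f (x, y))) (by fun_prop) _ _
  rw [intervalIntegral.integral_congr (g := fun x =>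
      (1/2) * (∫ y in a₂..b₂, div2 (fun z => (f z * f z) • bb z) (x, y))
        + (1/2) * (∫ y in a₂..b₂, f (x, y) * (div2 bb (x, y) * f (x, y))))
      (fun x _ => hin x),
    intervalIntegral.integral_add (f := fun x =>
        (1/2 : ℝ) * ∫ y in a₂..b₂, div2 (fun z => (f z * f z) • bb z) (x, y))
      (g := fun x => (1/2 : ℝ) * ∫ y in a₂..b₂, f (x, y) * (div2 bb (x, y) * f (x, y)))
      ((continuous_const.mul cA : Continuous fun x =>
        (1/2 : ℝ) * ∫ y in a₂..b₂, div2 (fun z => (f z * f z) • bb z) (x, y)).intervalIntegrable _ _)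
      ((continuous_const.mul cC : Continuous fun x =>
        (1/2 : ℝ) * ∫ y in a₂..b₂, f (x, y) * (div2 bb (x, y) * f (x, y))).intervalIntegrable _ _),
    intervalIntegral.integral_const_mul, intervalIntegral.integral_const_mul]

lemma edge {c d u v p q : ℝ → ℝ} (hc : Continuous c) (hd : Continuous d)
    (hu : Continuous u) (hv : Continuous v) (hp : Continuous p) (hq : Continuous q)
    (a b : ℝ) :
    (∫ x in a..b, (d x * q x * v x - c x * p x * u x))
      - (1/2) * (∫ x in a..b, (v x * v x * d x - u x * u x * c x))
    = -(1/2) * (∫ x in a..b, (d x * (v x - q x)^2 - c x * (u x - p x)^2))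
      + (1/2) * (∫ x in a..b, (d x * (q x)^2 - c x * (p x)^2)) := by
  rw [← intervalIntegral.integral_const_mul, ← intervalIntegral.integral_const_mul,
    ← intervalIntegral.integral_const_mul,
    ← intervalIntegral.integral_sub ((by fun_prop : Continuous fun x =>
        d x * q x * v x - c x * p x * u x).intervalIntegrable _ _)
      ((by fun_prop : Continuous fun x =>
        1/2 * (v x * v x * d x - u x * u x * c x)).intervalIntegrable _ _),
    ← intervalIntegral.integral_add ((by fun_prop : Continuous fun x =>
        -(1/2) * (d x * (v x - q x)^2 - c x * (u x - p x)^2)).intervalIntegrable _ _)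
      ((by fun_prop : Continuous fun x =>
        1/2 * (d x * (q x)^2 - c x * (p x)^2)).intervalIntegrable _ _)]
  exact intervalIntegral.integral_congr fun x _ => by ring

lemma key {bb : ℝ × ℝ → ℝ × ℝ} {f : ℝ × ℝ → ℝ} (hbb : ContDiff ℝ 1 bb)
    (hf : ContDiff ℝ 1 f) {p q r s : ℝ → ℝ} (hp : Continuous p) (hq : Continuous q)
    (hr : Continuous r) (hs : Continuous s) (a₁ b₁ a₂ b₂ : ℝ) :
    (-(∫ x in a₁..b₁, ∫ y in a₂..b₂, f (x, y) * div2 (fun z => f z • bb z) (x, y))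
      + ((∫ x in a₁..b₁, ((bb (x, b₂)).2 * q x * f (x, b₂) - (bb (x, a₂)).2 * p x * f (x, a₂)))
        + (∫ y in a₂..b₂, ((bb (b₁, y)).1 * s y * f (b₁, y) - (bb (a₁, y)).1 * r y * f (a₁, y)))))
    = -(1/2) * (∫ x in a₁..b₁, ∫ y in a₂..b₂, f (x, y) * (div2 bb (x, y) * f (x, y)))
      - (1/2) * ((∫ x in a₁..b₁, ((bb (x, b₂)).2 * (f (x, b₂) - q x)^2
            - (bb (x, a₂)).2 * (f (x, a₂) - p x)^2))
        + (∫ y in a₂..b₂, ((bb (b₁, y)).1 * (f (b₁, y) - s y)^2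
            - (bb (a₁, y)).1 * (f (a₁, y) - r y)^2)))
      + (1/2) * ((∫ x in a₁..b₁, ((bb (x, b₂)).2 * (q x)^2 - (bb (x, a₂)).2 * (p x)^2))
        + (∫ y in a₂..b₂, ((bb (b₁, y)).1 * (s y)^2 - (bb (a₁, y)).1 * (r y)^2))) := by
  have hbc : Continuous bb := hbb.continuous
  have hfc : Continuous f := hf.continuous
  have hG : ContDiff ℝ 1 (fun z => (f z * f z) • bb z) := (hf.mul hf).smul hbb
  have hDG := divthm hG a₁ b₁ a₂ b₂
  simp only [Prod.smul_snd, Prod.smul_fst, smul_eq_mul] at hDG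
  have e1 := edge (c := fun x => (bb (x, a₂)).2) (d := fun x => (bb (x, b₂)).2)
    (u := fun x => f (x, a₂)) (v := fun x => f (x, b₂)) (p := p) (q := q)
    (by fun_prop) (by fun_prop) (by fun_prop) (by fun_prop) hp hq a₁ b₁
  have e2 := edge (c := fun y => (bb (a₁, y)).1) (d := fun y => (bb (b₁, y)).1)
    (u := fun y => f (a₁, y)) (v := fun y => f (b₁, y)) (p := r) (q := s)
    (by fun_prop) (by fun_prop) (by fun_prop) (by fun_prop) hr hs a₂ b₂
  rw [dbl hbb hf, hDG]
  linarith [e1, e2]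

/-- Summed energy identity for the weak convection divergence on a tensor-product
rectangular partition of `Ω = (0,1)²`: with `v_b` single-valued on interior edges
(vertical edge functions `vbV i j` at `x = x_i`, horizontal `vbH i j` at `y = y_j`)
and vanishing on `∂Ω`,
`Σ_T (∇_w^b v, v₀)_T = -(1/2) Σ_T (v₀, (∇·b) v₀)_T
  - (1/2) Σ_T ⟨(b·n)(v₀-v_b), v₀-v_b⟩_{∂T}`,
where `(∇_w^b v, v₀)_T = -(v₀, ∇·(b v₀))_T + ⟨v_b, (b·n) v₀⟩_{∂T}`; the boundary terms
involving `v_b` alone cancel across interior edges. -/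
theorem stmt13 (M : ℕ) (hM : 1 ≤ M) (xg yg : ℕ → ℝ)
    (hx0 : xg 0 = 0) (hxM : xg M = 1) (hy0 : yg 0 = 0) (hyM : yg M = 1)
    (hxmono : ∀ i < M, xg i < xg (i+1)) (hymono : ∀ j < M, yg j < yg (j+1))
    (bb : ℝ × ℝ → ℝ × ℝ) (hbb : ContDiff ℝ 1 bb)
    (v₀ : ℕ → ℕ → ℝ × ℝ → ℝ) (hv₀ : ∀ i j, ContDiff ℝ 1 (v₀ i j))
    (vbV vbH : ℕ → ℕ → ℝ → ℝ)
    (hvbVc : ∀ i j, Continuous (vbV i j)) (hvbHc : ∀ i j, Continuous (vbH i j))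
    (hL : ∀ j, vbV 0 j = fun _ => 0) (hR : ∀ j, vbV M j = fun _ => 0)
    (hB : ∀ i, vbH i 0 = fun _ => 0) (hT : ∀ i, vbH i M = fun _ => 0) :
    (∑ i ∈ Finset.range M, ∑ j ∈ Finset.range M,
      (-(∫ x in xg i..xg (i+1), ∫ y in yg j..yg (j+1),
            v₀ i j (x, y) * div2 (fun z => v₀ i j z • bb z) (x, y))
        + ((∫ x in xg i..xg (i+1),
              ((bb (x, yg (j+1))).2 * vbH i (j+1) x * v₀ i j (x, yg (j+1))
                - (bb (x, yg j)).2 * vbH i j x * v₀ i j (x, yg j)))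
          + (∫ y in yg j..yg (j+1),
              ((bb (xg (i+1), y)).1 * vbV (i+1) j y * v₀ i j (xg (i+1), y)
                - (bb (xg i, y)).1 * vbV i j y * v₀ i j (xg i, y)))))) =
    -(1/2) * (∑ i ∈ Finset.range M, ∑ j ∈ Finset.range M,
        ∫ x in xg i..xg (i+1), ∫ y in yg j..yg (j+1),
          v₀ i j (x, y) * (div2 bb (x, y) * v₀ i j (x, y)))
    - (1/2) * (∑ i ∈ Finset.range M, ∑ j ∈ Finset.range M,
        ((∫ x in xg i..xg (i+1),
            ((bb (x, yg (j+1))).2 * (v₀ i j (x, yg (j+1)) - vbH i (j+1) x)^2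
              - (bb (x, yg j)).2 * (v₀ i j (x, yg j) - vbH i j x)^2))
          + (∫ y in yg j..yg (j+1),
            ((bb (xg (i+1), y)).1 * (v₀ i j (xg (i+1), y) - vbV (i+1) j y)^2
              - (bb (xg i, y)).1 * (v₀ i j (xg i, y) - vbV i j y)^2)))) := by
  have hbc : Continuous bb := hbb.continuous
  -- telescoping lemma for the Q-terms
  set gH : ℕ → ℕ → ℝ := fun i j => ∫ x in xg i..xg (i+1), (bb (x, yg j)).2 * (vbH i j x)^2
    with hgH
  set gV : ℕ → ℕ → ℝ := fun j i => ∫ y in yg j..yg (j+1), (bb (xg i, y)).1 * (vbV i j y)^2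
    with hgV
  have hQ : (∑ i ∈ Finset.range M, ∑ j ∈ Finset.range M,
      ((∫ x in xg i..xg (i+1),
          ((bb (x, yg (j+1))).2 * (vbH i (j+1) x)^2 - (bb (x, yg j)).2 * (vbH i j x)^2))
        + (∫ y in yg j..yg (j+1),
          ((bb (xg (i+1), y)).1 * (vbV (i+1) j y)^2 - (bb (xg i, y)).1 * (vbV i j y)^2)))) = 0 := by
    have hsplit : ∀ i j : ℕ,
        (∫ x in xg i..xg (i+1),
          ((bb (x, yg (j+1))).2 * (vbH i (j+1) x)^2 - (bb (x, yg j)).2 * (vbH i j x)^2))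
        = gH i (j+1) - gH i j := by
      intro i j
      have h1 := hvbHc i (j+1); have h2 := hvbHc i j
      exact intervalIntegral.integral_sub
        ((by fun_prop : Continuous fun x => (bb (x, yg (j+1))).2 * (vbH i (j+1) x)^2).intervalIntegrable _ _)
        ((by fun_prop : Continuous fun x => (bb (x, yg j)).2 * (vbH i j x)^2).intervalIntegrable _ _)
    have vsplit : ∀ i j : ℕ,
        (∫ y in yg j..yg (j+1),
          ((bb (xg (i+1), y)).1 * (vbV (i+1) j y)^2 - (bb (xg i, y)).1 * (vbV i j y)^2))
        = gV j (i+1) - gV j i := by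
      intro i j
      have h1 := hvbVc (i+1) j; have h2 := hvbVc i j
      exact intervalIntegral.integral_sub
        ((by fun_prop : Continuous fun y => (bb (xg (i+1), y)).1 * (vbV (i+1) j y)^2).intervalIntegrable _ _)
        ((by fun_prop : Continuous fun y => (bb (xg i, y)).1 * (vbV i j y)^2).intervalIntegrable _ _)
    simp only [hsplit, vsplit, Finset.sum_add_distrib]
    have hHtel : ∀ i, (∑ j ∈ Finset.range M, (gH i (j+1) - gH i j)) = 0 := by
      intro i
      rw [Finset.sum_range_sub (fun j => gH i j)]
      have : gH i M = 0 := by simp [hgH, hT i]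
      have h0 : gH i 0 = 0 := by simp [hgH, hB i]
      rw [this, h0, sub_zero]
    have hVtel : (∑ i ∈ Finset.range M, ∑ j ∈ Finset.range M, (gV j (i+1) - gV j i)) = 0 := by
      rw [Finset.sum_comm]
      refine Finset.sum_eq_zero fun j _ => ?_
      rw [Finset.sum_range_sub (fun i => gV j i)]
      have h1 : gV j M = 0 := by simp [hgV, hR j]
      have h0 : gV j 0 = 0 := by simp [hgV, hL j]
      rw [h1, h0, sub_zero]
    rw [hVtel, Finset.sum_congr rfl fun i _ => hHtel i]
    simp
  -- apply the per-element identity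
  have hkey : ∀ i j : ℕ,
      (-(∫ x in xg i..xg (i+1), ∫ y in yg j..yg (j+1),
            v₀ i j (x, y) * div2 (fun z => v₀ i j z • bb z) (x, y))
        + ((∫ x in xg i..xg (i+1),
              ((bb (x, yg (j+1))).2 * vbH i (j+1) x * v₀ i j (x, yg (j+1))
                - (bb (x, yg j)).2 * vbH i j x * v₀ i j (x, yg j)))
          + (∫ y in yg j..yg (j+1),
              ((bb (xg (i+1), y)).1 * vbV (i+1) j y * v₀ i j (xg (i+1), y)
                - (bb (xg i, y)).1 * vbV i j y * v₀ i j (xg i, y)))))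
      = -(1/2) * (∫ x in xg i..xg (i+1), ∫ y in yg j..yg (j+1),
            v₀ i j (x, y) * (div2 bb (x, y) * v₀ i j (x, y)))
        - (1/2) * ((∫ x in xg i..xg (i+1),
              ((bb (x, yg (j+1))).2 * (v₀ i j (x, yg (j+1)) - vbH i (j+1) x)^2
                - (bb (x, yg j)).2 * (v₀ i j (x, yg j) - vbH i j x)^2))
            + (∫ y in yg j..yg (j+1),
              ((bb (xg (i+1), y)).1 * (v₀ i j (xg (i+1), y) - vbV (i+1) j y)^2
                - (bb (xg i, y)).1 * (v₀ i j (xg i, y) - vbV i j y)^2)))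
        + (1/2) * ((∫ x in xg i..xg (i+1),
              ((bb (x, yg (j+1))).2 * (vbH i (j+1) x)^2 - (bb (x, yg j)).2 * (vbH i j x)^2))
            + (∫ y in yg j..yg (j+1),
              ((bb (xg (i+1), y)).1 * (vbV (i+1) j y)^2 - (bb (xg i, y)).1 * (vbV i j y)^2))) :=
    fun i j => key hbb (hv₀ i j) (hvbHc i j) (hvbHc i (j+1)) (hvbVc i j) (hvbVc (i+1) j)
      (xg i) (xg (i+1)) (yg j) (yg (j+1))
  calc _ = ∑ i ∈ Finset.range M, ∑ j ∈ Finset.range M, _ :=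
        Finset.sum_congr rfl fun i _ => Finset.sum_congr rfl fun j _ => hkey i j
    _ = _ := by
        simp only [Finset.sum_add_distrib, Finset.sum_sub_distrib, ← Finset.mul_sum] at hQ ⊢
        rw [hQ]; ring
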